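/- arXiv:1707.06534 — 4 statements merged into one kernel-verified Lean document; each statement's English description precedes it below -/
import Mathlib

section
/- The partially entangled two-qubit state |ψ_θ⟩ = cos θ |00⟩ + sin θ |11⟩ with measurements A₀ = σ_z, A₁ = σ_x on the first qubit and B₀ = cos μ σ_z + sin μ σ_x, B₁ = cos μ σ_z − sin μ σ_x on the second qubit, where μ = arctan(sin 2θ), achieves the value α⟨A₀⟩ + ⟨A₀B₀⟩ + ⟨A₀B₁⟩ + ⟨A₁B₀⟩ − ⟨A₁B₁⟩ = √(8 + 2α²) of the tilted CHSH expression, where α = 2 cos 2θ / √(1 + sin² 2θ). -/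
open Matrix Kronecker

/-- The state cos θ |00⟩ + sin θ |11⟩ with the ideal tilted-CHSH measurements achieves
the quantum value √(8 + 2α²) of the tilted CHSH expression, where
α = 2 cos 2θ / √(1 + sin² 2θ) and μ = arctan(sin 2θ). -/
theorem stmt4 (θ : ℝ) (hθ : θ ∈ Set.Ioc 0 (Real.pi / 4)) :
    let σz : Matrix (Fin 2) (Fin 2) ℂ := !![1, 0; 0, -1]
    let σx : Matrix (Fin 2) (Fin 2) ℂ := !![0, 1; 1, 0]
    let α : ℝ := 2 * Real.cos (2 * θ) / Real.sqrt (1 + Real.sin (2 * θ) ^ 2)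
    let μ : ℝ := Real.arctan (Real.sin (2 * θ))
    let ψ : Fin 2 × Fin 2 → ℂ := fun p =>
      if p = (0, 0) then (Real.cos θ : ℂ) else if p = (1, 1) then (Real.sin θ : ℂ) else 0
    let E : Matrix (Fin 2 × Fin 2) (Fin 2 × Fin 2) ℂ → ℂ := fun M => star ψ ⬝ᵥ M.mulVec ψ
    let A0 := σz
    let A1 := σx
    let B0 := (Real.cos μ : ℂ) • σz + (Real.sin μ : ℂ) • σx
    let B1 := (Real.cos μ : ℂ) • σz - (Real.sin μ : ℂ) • σx
    (α : ℂ) * E (A0 ⊗ₖ (1 : Matrix (Fin 2) (Fin 2) ℂ)) + E (A0 ⊗ₖ B0) + E (A0 ⊗ₖ B1)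
        + E (A1 ⊗ₖ B0) - E (A1 ⊗ₖ B1)
      = (Real.sqrt (8 + 2 * α ^ 2) : ℂ) := by
  intro σz σx α μ ψ E A0 A1 B0 B1
  simp only [E, ψ, A0, A1, B0, B1, σz, σx, dotProduct, Matrix.mulVec, Fintype.sum_prod_type,
    Fin.sum_univ_two, kroneckerMap_apply, Matrix.one_apply, Matrix.add_apply, Matrix.sub_apply,
    Matrix.smul_apply, Matrix.cons_val', Matrix.cons_val_zero, Matrix.cons_val_one,
    Matrix.head_cons, Matrix.head_fin_const, Matrix.empty_val', Matrix.cons_val_fin_one,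
    Pi.star_apply, star_zero, Prod.mk.injEq]
  norm_num
  rw [← Complex.ofReal_cos, ← Complex.ofReal_sin, ← Complex.ofReal_cos, ← Complex.ofReal_sin]
  simp only [Complex.conj_ofReal]
  set c := Real.cos θ
  set s := Real.sin θ
  have key : α * (c * c - s * s) + (c * (Real.cos μ * c) + s * (Real.cos μ * s))
      + (c * (Real.cos μ * c) + s * (Real.cos μ * s))
      + (c * (Real.sin μ * s) + s * (Real.sin μ * c))
      - (-(c * (Real.sin μ * s)) + -(s * (Real.sin μ * c)))
      = Real.sqrt (8 + 2 * α ^ 2) := by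
    have ht : (0:ℝ) < 1 + Real.sin (2*θ) ^ 2 := by positivity
    have hr : (0:ℝ) < Real.sqrt (1 + Real.sin (2*θ) ^ 2) := Real.sqrt_pos.2 ht
    have hrsq : Real.sqrt (1 + Real.sin (2*θ) ^ 2) ^ 2 = 1 + Real.sin (2*θ) ^ 2 :=
      Real.sq_sqrt ht.le
    have hcs : Real.cos (2*θ) = c ^ 2 - s ^ 2 := Real.cos_two_mul' θ
    have hss : Real.sin (2*θ) = 2 * s * c := Real.sin_two_mul θ
    have hpyth : s ^ 2 + c ^ 2 = 1 := Real.sin_sq_add_cos_sq θ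
    have hpyth2 : Real.sin (2*θ) ^ 2 + Real.cos (2*θ) ^ 2 = 1 := Real.sin_sq_add_cos_sq (2*θ)
    have hμc : Real.cos μ = 1 / Real.sqrt (1 + Real.sin (2*θ) ^ 2) := by
      simp [μ, Real.cos_arctan, one_div]
    have hμs : Real.sin μ = Real.sin (2*θ) / Real.sqrt (1 + Real.sin (2*θ) ^ 2) := by
      simp [μ, Real.sin_arctan]
    have hα : α = 2 * Real.cos (2*θ) / Real.sqrt (1 + Real.sin (2*θ) ^ 2) := rfl
    have hR : Real.sqrt (8 + 2 * α ^ 2) = 4 / Real.sqrt (1 + Real.sin (2*θ) ^ 2) := by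
      have h1 : 8 + 2 * α ^ 2 = (4 / Real.sqrt (1 + Real.sin (2*θ) ^ 2)) ^ 2 := by
        rw [hα]
        field_simp
        nlinarith [hrsq, hcs, hss, hpyth, hpyth2]
      rw [h1, Real.sqrt_sq (by positivity)]
    rw [hR, hμc, hμs, hα, hss, hcs]
    field_simp
    ring_nf
    have hq : Real.sqrt (1 + c ^ 2 * s ^ 2 * 4) ^ 2 = 1 + c ^ 2 * s ^ 2 * 4 :=
      Real.sq_sqrt (by positivity)
    linear_combination (2 * s ^ 2 + 2 * c ^ 2 + 4) * hpyth
  exact_mod_cast key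
end

section
/- For the state |xW_N⟩, the probability that parties 1,…,N−2 all obtain outcome +1 when measuring σ_z (i.e., the squared norm of the projection onto |0⟩ for each of the first N−2 qubits) equals 2/N, and the renormalized post-measurement state of parties N−1 and N is the maximally entangled state (|00⟩+|11⟩)/√2. -/
/-- The state |xW_N⟩ = (1/√N)(|0⟩^{⊗N} + Σ_{j=1}^{N−1}|e_j e_N⟩) on N = n+2 qubits:
amplitude 1/√N on the all-zeros string and on each weight-2 string whose last bit
is 1. -/
noncomputable def xWState (n : ℕ) : (Fin (n + 2) → Fin 2) → ℂ := fun f =>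
  if f = (fun _ => 0) ∨ (f (Fin.last (n + 1)) = 1 ∧ (∑ i, (f i : ℕ)) = 2)
  then (1 / Real.sqrt (n + 2) : ℂ) else 0

lemma fin2cases (a : Fin 2) : a = 0 ∨ a = 1 := by omega

lemma sum_eq_two (n : ℕ) (f : Fin (n+2) → Fin 2) (h : ∀ i : Fin (n+2), (i:ℕ) < n → f i = 0) :
    (∑ i, (f i : ℕ)) = (f ⟨n, by simp⟩ : ℕ) + (f ⟨n+1, by simp⟩ : ℕ) := by
  have hne : (⟨n, by omega⟩ : Fin (n+2)) ≠ ⟨n+1, by omega⟩ := by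
    simp [Fin.ext_iff]
  have hsub : ∑ i ∈ ({⟨n, by omega⟩, ⟨n+1, by omega⟩} : Finset (Fin (n+2))), (f i : ℕ)
      = ∑ i, (f i : ℕ) := by
    refine Finset.sum_subset (Finset.subset_univ _) ?_
    intro x _ hx
    simp only [Finset.mem_insert, Finset.mem_singleton] at hx
    push_neg at hx
    have hlt := x.isLt
    have hxn : (x:ℕ) < n := by
      by_contra h'
      rcases (by omega : (x:ℕ) = n ∨ (x:ℕ) = n+1) with h''|h''
      · exact hx.1 (by apply Fin.ext; exact h'')
      · exact hx.2 (by apply Fin.ext; exact h'')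
    rw [h x hxn]; rfl
  rw [← hsub, Finset.sum_pair hne]

/-- Projection of the first n qubits of |xW_{n+2}⟩ onto |0⟩: the probability that
parties 1,…,n all obtain σ_z-outcome +1 is 2/(n+2), and the projected state is
(1/√(n+2)) |0⟩^{⊗n} ⊗ (|00⟩ + |11⟩), i.e. the renormalized post-measurement state
of the last two parties is the maximally entangled state (|00⟩+|11⟩)/√2. -/
theorem stmt13 (n : ℕ) :
    (∑ f : Fin (n + 2) → Fin 2,
        ‖(if ∀ i : Fin (n + 2), (i : ℕ) < n → f i = 0 then xWState n f else 0 : ℂ)‖ ^ 2)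
      = 2 / (n + 2) ∧
    (fun f : Fin (n + 2) → Fin 2 =>
        (if ∀ i : Fin (n + 2), (i : ℕ) < n → f i = 0 then xWState n f else 0 : ℂ))
      = fun f =>
        if (∀ i : Fin (n + 2), (i : ℕ) < n → f i = 0) ∧
            f ⟨n, by omega⟩ = f ⟨n + 1, by omega⟩
        then (1 / Real.sqrt (n + 2) : ℂ) else 0 := by
  have hlast : (Fin.last (n+1)) = (⟨n+1, by omega⟩ : Fin (n+2)) := rfl
  have key : (fun f : Fin (n + 2) → Fin 2 =>
        (if ∀ i : Fin (n + 2), (i : ℕ) < n → f i = 0 then xWState n f else 0 : ℂ))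
      = fun f =>
        if (∀ i : Fin (n + 2), (i : ℕ) < n → f i = 0) ∧
            f ⟨n, by omega⟩ = f ⟨n + 1, by omega⟩
        then (1 / Real.sqrt (n + 2) : ℂ) else 0 := by
    funext f
    by_cases hP : ∀ i : Fin (n + 2), (i : ℕ) < n → f i = 0
    · simp only [xWState, if_pos hP]
      have hsum := sum_eq_two n f hP
      rcases fin2cases (f ⟨n, by omega⟩) with ha|ha <;>
        rcases fin2cases (f ⟨n+1, by omega⟩) with hb|hb
      · have hf : f = (fun _ => 0) := by
          funext i
          by_cases h' : (i:ℕ) < n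
          · exact hP i h'
          · have hlt := i.isLt
            rcases (by omega : (i:ℕ) = n ∨ (i:ℕ) = n+1) with h''|h''
            · rw [show i = (⟨n, by omega⟩ : Fin (n+2)) by apply Fin.ext; exact h'', ha]
            · rw [show i = (⟨n+1, by omega⟩ : Fin (n+2)) by apply Fin.ext; exact h'', hb]
        rw [if_pos (Or.inl hf), if_pos ⟨hP, ha.trans hb.symm⟩]
      · rw [if_neg, if_neg]
        · rintro ⟨-, h2⟩
          rw [ha, hb] at h2; exact absurd h2 (by decide)
        · rintro (hf | ⟨-, h2⟩)
          · have := congrFun hf ⟨n+1, by omega⟩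
            rw [hb] at this; exact absurd this (by decide)
          · rw [hsum, ha, hb] at h2; exact absurd h2 (by decide)
      · rw [if_neg, if_neg]
        · rintro ⟨-, h2⟩
          rw [ha, hb] at h2; exact absurd h2 (by decide)
        · rintro (hf | ⟨h1, -⟩)
          · have := congrFun hf ⟨n, by omega⟩
            rw [ha] at this; exact absurd this (by decide)
          · rw [hlast, hb] at h1; exact absurd h1 (by decide)
      · rw [if_pos (Or.inr ⟨hlast ▸ hb, by rw [hsum, ha, hb]; rfl⟩),
          if_pos ⟨hP, ha.trans hb.symm⟩]
    · simp [hP]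
  refine ⟨?_, key⟩
  have hrw : (∑ f : Fin (n + 2) → Fin 2,
        ‖(if ∀ i : Fin (n + 2), (i : ℕ) < n → f i = 0 then xWState n f else 0 : ℂ)‖ ^ 2)
      = ∑ f : Fin (n + 2) → Fin 2,
        (if (∀ i : Fin (n + 2), (i : ℕ) < n → f i = 0) ∧
            f ⟨n, by omega⟩ = f ⟨n + 1, by omega⟩
          then 1 / (n + 2 : ℝ) else 0) := by
    refine Finset.sum_congr rfl fun f _ => ?_
    rw [congrFun key f]
    split
    · rw [norm_div, norm_one]
      rw [show ‖((Real.sqrt (n+2) : ℝ) : ℂ)‖ = Real.sqrt (n+2) by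
        rw [Complex.norm_real]
        exact abs_of_nonneg (Real.sqrt_nonneg _)]
      rw [div_pow, one_pow, Real.sq_sqrt (by positivity)]
    · simp
  rw [hrw, Finset.sum_ite, Finset.sum_const_zero, add_zero, Finset.sum_const]
  have hfilter : (Finset.univ.filter (fun f : Fin (n+2) → Fin 2 =>
      (∀ i : Fin (n + 2), (i : ℕ) < n → f i = 0) ∧ f ⟨n, by omega⟩ = f ⟨n + 1, by omega⟩))
      = {(fun _ => 0 : Fin (n+2) → Fin 2),
         (fun i : Fin (n+2) => if (i:ℕ) < n then 0 else 1)} := by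
    ext f
    simp only [Finset.mem_filter, Finset.mem_univ, true_and, Finset.mem_insert,
      Finset.mem_singleton]
    constructor
    · rintro ⟨h1, h2⟩
      rcases fin2cases (f ⟨n, by omega⟩) with ha|ha
      · left
        funext i
        by_cases h' : (i:ℕ) < n
        · exact h1 i h'
        · have hlt := i.isLt
          rcases (by omega : (i:ℕ) = n ∨ (i:ℕ) = n+1) with h''|h''
          · rw [show i = (⟨n, by omega⟩ : Fin (n+2)) by apply Fin.ext; exact h'', ha]
          · rw [show i = (⟨n+1, by omega⟩ : Fin (n+2)) by apply Fin.ext; exact h'', ← h2, ha]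
      · right
        funext i
        by_cases h' : (i:ℕ) < n
        · simp [h', h1 i h']
        · have hlt := i.isLt
          rw [if_neg h']
          rcases (by omega : (i:ℕ) = n ∨ (i:ℕ) = n+1) with h''|h''
          · rw [show i = (⟨n, by omega⟩ : Fin (n+2)) by apply Fin.ext; exact h'', ha]
          · rw [show i = (⟨n+1, by omega⟩ : Fin (n+2)) by apply Fin.ext; exact h'', ← h2, ha]
    · rintro (rfl|rfl)
      · exact ⟨fun _ _ => rfl, rfl⟩
      · refine ⟨fun i hi => by simp [hi], ?_⟩
        simp
  rw [hfilter, Finset.card_insert_of_notMem, Finset.card_singleton]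
  · rw [nsmul_eq_mul]
    push_cast
    ring
  · rw [Finset.mem_singleton]
    intro hf
    have := congrFun hf ⟨n+1, by omega⟩
    simp at this
end

section
/- Let |ψ⟩ be a vector and Z₁,…,Z_{N−1} commuting self-adjoint involutions with spectral projections Z_i^{(±)} = (I ± Z_i)/2. Suppose ⟨ψ|Z_i^{(−)}|ψ⟩ = 1/N and ⟨ψ| (⊗_{l≠i} Z_l^{(+)}) Z_i^{(−)} |ψ⟩ = 1/N for each i. Then ⟨ψ|Z_i^{(−)} Z_j^{(−)}|ψ⟩ = 0 and hence Z_i^{(−)} Z_j^{(−)}|ψ⟩ = 0 for all i ≠ j. -/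
open scoped InnerProductSpace

/-- If ⟨ψ|Z_i^{(−)}|ψ⟩ = 1/N and ⟨ψ|(⊗_{l≠i} Z_l^{(+)}) Z_i^{(−)}|ψ⟩ = 1/N for each i,
for commuting self-adjoint involutions Z_i, then ⟨ψ|Z_i^{(−)}Z_j^{(−)}|ψ⟩ = 0 and
Z_i^{(−)}Z_j^{(−)}|ψ⟩ = 0 for all i ≠ j. -/
theorem stmt14 {H : Type*} [NormedAddCommGroup H] [InnerProductSpace ℂ H]
    (N : ℕ) (hN : 2 ≤ N) (ψ : H) (hψ : ‖ψ‖ = 1)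
    (Z Zp Zm : Fin N → (H →ₗ[ℂ] H))
    (hZ2 : ∀ i, Z i * Z i = 1)
    (hsa : ∀ i, ∀ x y : H, ⟪Z i x, y⟫_ℂ = ⟪x, Z i y⟫_ℂ)
    (hcomm : ∀ i j, Z i * Z j = Z j * Z i)
    (hZp : ∀ i, Zp i = (1/2 : ℂ) • ((1 : H →ₗ[ℂ] H) + Z i))
    (hZm : ∀ i, Zm i = (1/2 : ℂ) • ((1 : H →ₗ[ℂ] H) - Z i))
    (hPcomm : ∀ a b, Commute (Zp a) (Zp b))
    (h1 : ∀ i, ⟪ψ, Zm i ψ⟫_ℂ = (1 / N : ℂ))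
    (h2 : ∀ i : Fin N,
      ⟪ψ, ((Finset.univ.erase i).noncommProd Zp (fun a _ b _ _ => hPcomm a b))
          (Zm i ψ)⟫_ℂ = (1 / N : ℂ)) :
    ∀ i j, i ≠ j → ⟪ψ, Zm i (Zm j ψ)⟫_ℂ = 0 ∧ Zm i (Zm j ψ) = 0 := by
  classical
  -- Zp is idempotent
  have hZpZp : ∀ i, Zp i * Zp i = Zp i := by
    intro i
    rw [hZp]
    simp only [smul_mul_assoc, mul_smul_comm, add_mul, mul_add, one_mul, mul_one, hZ2, smul_smul]
    module
  -- Zm is idempotent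
  have hZmZm : ∀ i, Zm i * Zm i = Zm i := by
    intro i
    rw [hZm]
    simp only [smul_mul_assoc, mul_smul_comm, sub_mul, mul_sub, one_mul, mul_one, hZ2, smul_smul]
    module
  -- Zm i * Zp i = 0
  have hZmZp0 : ∀ i, Zm i * Zp i = 0 := by
    intro i
    rw [hZm, hZp]
    simp only [smul_mul_assoc, mul_smul_comm, sub_mul, mul_add, add_mul, one_mul, mul_one,
      hZ2, smul_smul]
    module
  -- Zm i commutes with Zp j
  have hZmZpc : ∀ i j, Commute (Zm i) (Zp j) := by
    intro i j
    rw [hZm i, hZp j]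
    refine (Commute.smul_left ?_ _).smul_right _
    exact ((Commute.one_right _).add_right
      ((Commute.one_left _).sub_left (hcomm i j)))
  -- self-adjointness of Zm and Zp
  have hsaZm : ∀ i, ∀ x y : H, ⟪Zm i x, y⟫_ℂ = ⟪x, Zm i y⟫_ℂ := by
    intro i x y
    simp [hZm, inner_smul_left, inner_smul_right, inner_sub_left, inner_sub_right, hsa,
      Complex.conj_ofNat]
    ring
  have hsaZp : ∀ i, ∀ x y : H, ⟪Zp i x, y⟫_ℂ = ⟪x, Zp i y⟫_ℂ := by
    intro i x y
    simp [hZp, inner_smul_left, inner_smul_right, inner_add_left, inner_add_right, hsa,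
      Complex.conj_ofNat]
    ring
  -- products of Zp over finsets: self-adjoint and idempotent
  have hsaP : ∀ s : Finset (Fin N), ∀ x y : H,
      ⟪(s.noncommProd Zp (fun a _ b _ _ => hPcomm a b)) x, y⟫_ℂ
        = ⟪x, (s.noncommProd Zp (fun a _ b _ _ => hPcomm a b)) y⟫_ℂ := by
    intro s
    induction s using Finset.cons_induction with
    | empty => simp [Finset.noncommProd_empty (h := fun a _ b _ _ => hPcomm a b)]
    | cons a s ha ih =>
      intro x y
      rw [Finset.noncommProd_cons (comm := fun a _ b _ _ => hPcomm a b)]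
      set Q := s.noncommProd Zp (fun a _ b _ _ => hPcomm a b) with hQ
      have hc : Commute (Zp a) Q := Finset.noncommProd_commute _ _ _ _ (fun x _ => hPcomm a x)
      simp only [Module.End.mul_apply]
      rw [hsaZp, ih]
      rw [← Module.End.mul_apply Q (Zp a), ← hc.eq, Module.End.mul_apply]
  have hPidem : ∀ s : Finset (Fin N),
      (s.noncommProd Zp (fun a _ b _ _ => hPcomm a b))
        * (s.noncommProd Zp (fun a _ b _ _ => hPcomm a b))
        = s.noncommProd Zp (fun a _ b _ _ => hPcomm a b) := by
    intro s
    induction s using Finset.cons_induction with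
    | empty => simp [Finset.noncommProd_empty (h := fun a _ b _ _ => hPcomm a b)]
    | cons a s ha ih =>
      rw [Finset.noncommProd_cons (comm := fun a _ b _ _ => hPcomm a b)]
      set Q := s.noncommProd Zp (fun a _ b _ _ => hPcomm a b) with hQ
      have hc : Commute (Zp a) Q := Finset.noncommProd_commute _ _ _ _ (fun x _ => hPcomm a x)
      rw [mul_assoc (Zp a) Q (Zp a * Q), ← mul_assoc Q (Zp a) Q, ← hc.eq,
        mul_assoc (Zp a) Q Q, ← mul_assoc, hZpZp, ih]
  -- main argument
  intro i j hij
  set P := (Finset.univ.erase j).noncommProd Zp (fun a _ b _ _ => hPcomm a b) with hP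
  set φ := Zm j ψ with hφ
  have hidx : i ∈ Finset.univ.erase j := Finset.mem_erase.mpr ⟨hij, Finset.mem_univ i⟩
  -- Zm i * P = 0
  have hiP : Zm i * P = 0 := by
    rw [hP, ← Finset.mul_noncommProd_erase (Finset.univ.erase j) hidx Zp
      (fun a _ b _ _ => hPcomm a b), ← mul_assoc, hZmZp0, zero_mul]
  -- Zm j commutes with P
  have hjP : Commute (Zm j) P :=
    Finset.noncommProd_commute _ _ _ _ (fun x _ => hZmZpc j x)
  -- ⟪φ, P φ⟫ = 1/N
  have ha : ⟪φ, P φ⟫_ℂ = (1 / N : ℂ) := by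
    rw [hφ, hsaZm, ← Module.End.mul_apply, ← Module.End.mul_apply, hjP.eq, mul_assoc, hZmZm,
      Module.End.mul_apply]
    exact h2 j
  -- ⟪φ, φ⟫ = 1/N
  have hb : ⟪φ, φ⟫_ℂ = (1 / N : ℂ) := by
    rw [hφ, hsaZm, ← Module.End.mul_apply, hZmZm]
    exact h1 j
  -- P φ = φ
  have hPφ : P φ = φ := by
    have hzero : ⟪φ - P φ, φ - P φ⟫_ℂ = 0 := by
      rw [inner_sub_left, inner_sub_right, inner_sub_right]
      have h3 : ⟪P φ, φ⟫_ℂ = (1 / N : ℂ) := by rw [hsaP]; exact ha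
      have h4 : ⟪P φ, P φ⟫_ℂ = (1 / N : ℂ) := by
        rw [hsaP, ← Module.End.mul_apply, hPidem]; exact ha
      rw [ha, hb, h3, h4]
      ring
    have := inner_self_eq_zero.mp hzero
    rw [sub_eq_zero] at this
    exact this.symm
  have hij0 : Zm i (Zm j ψ) = 0 := by
    rw [← hφ, ← hPφ, ← Module.End.mul_apply, hiP, LinearMap.zero_apply]
  exact ⟨by rw [hij0, inner_zero_right], hij0⟩
end

section
/- Swap-isometry output for the self-tested two-qubit state: let |ψ⟩ be a state and Z_A, X_A, Z_B, X_B self-adjoint involutions with Z_A, X_A commuting with Z_B, X_B, satisfying Z_A|ψ⟩ = Z_B|ψ⟩ and cos θ · X_A(I − Z_A)|ψ⟩ = sin θ · X_B(I + Z_A)|ψ⟩, and also {Z_A, X_A}|ψ⟩ = 0 = {Z_B, X_B}|ψ⟩. Then the SWAP isometry Φ (appending two ancilla qubits in |0⟩, applying Hadamards, controlled-Z_A/Z_B, Hadamards, and controlled-X_A/X_B as in the standard circuit) satisfies Φ(|ψ⟩ ⊗ |00⟩) = (1/cos θ) Z_A^{(+)}|ψ⟩ ⊗ (cos θ |00⟩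 + sin θ |11⟩), where Z_A^{(+)} = (I + Z_A)/2. -/
open scoped InnerProductSpace

/-- SWAP-isometry output for the self-tested two-qubit state: with the ancillae
modeled by components indexed by (a,b) ∈ {0,1}², the isometry output
Φ(|ψ⟩⊗|00⟩) = Σ_{a,b} X_A^a X_B^b Z_A^{(a)} Z_B^{(b)}|ψ⟩ ⊗ |ab⟩ equals
junk ⊗ (cos θ |00⟩ + sin θ |11⟩) with junk = (1/cos θ) Z_A^{(+)}|ψ⟩. -/
theorem stmt19 {H : Type*} [NormedAddCommGroup H] [InnerProductSpace ℂ H]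
    (θ : ℝ) (hθ : θ ∈ Set.Ioc 0 (Real.pi / 4))
    (ZA XA ZB XB : H →ₗ[ℂ] H) (ψ : H)
    (hZA2 : ZA * ZA = 1) (hXA2 : XA * XA = 1) (hZB2 : ZB * ZB = 1) (hXB2 : XB * XB = 1)
    (hZAsa : ∀ x y : H, ⟪ZA x, y⟫_ℂ = ⟪x, ZA y⟫_ℂ)
    (hXAsa : ∀ x y : H, ⟪XA x, y⟫_ℂ = ⟪x, XA y⟫_ℂ)
    (hZBsa : ∀ x y : H, ⟪ZB x, y⟫_ℂ = ⟪x, ZB y⟫_ℂ)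
    (hXBsa : ∀ x y : H, ⟪XB x, y⟫_ℂ = ⟪x, XB y⟫_ℂ)
    (hc1 : ZA * ZB = ZB * ZA) (hc2 : ZA * XB = XB * ZA)
    (hc3 : XA * ZB = ZB * XA) (hc4 : XA * XB = XB * XA)
    (hZ : ZA ψ = ZB ψ)
    (hX : (Real.cos θ : ℂ) • XA (((1 : H →ₗ[ℂ] H) - ZA) ψ)
        = (Real.sin θ : ℂ) • XB (((1 : H →ₗ[ℂ] H) + ZA) ψ))
    (hacA : (ZA * XA + XA * ZA) ψ = 0) (hacB : (ZB * XB + XB * ZB) ψ = 0) :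
    (fun p : Fin 2 × Fin 2 =>
        (if p.1 = 1 then XA else 1)
          ((if p.2 = 1 then XB else 1)
            ((((1/2 : ℂ) • ((1 : H →ₗ[ℂ] H) + ((-1 : ℂ) ^ (p.1 : ℕ)) • ZA)))
              (((1/2 : ℂ) • ((1 : H →ₗ[ℂ] H) + ((-1 : ℂ) ^ (p.2 : ℕ)) • ZB)) ψ))))
      = fun p =>
        (if p = (0, 0) then (Real.cos θ : ℂ)
          else if p = (1, 1) then (Real.sin θ : ℂ) else 0) •
          ((1 / (Real.cos θ : ℂ)) •
            (((1/2 : ℂ) • ((1 : H →ₗ[ℂ] H) + ZA)) ψ)) := by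
  have hcosR : Real.cos θ ≠ 0 := by
    have h1 : 0 < θ := hθ.1
    have h2 : θ ≤ Real.pi / 4 := hθ.2
    have : (0:ℝ) < Real.cos θ := by
      apply Real.cos_pos_of_mem_Ioo
      constructor
      · linarith [Real.pi_pos]
      · linarith [Real.pi_pos]
    linarith
  have hcos : (Real.cos θ : ℂ) ≠ 0 := Complex.ofReal_ne_zero.mpr hcosR
  have hcos2 : Complex.cos (θ : ℂ) ≠ 0 := by rw [← Complex.ofReal_cos]; exact hcos
  have hZA2' : ∀ x, ZA (ZA x) = x := fun x => by
    have := LinearMap.ext_iff.mp hZA2 x; simpa using this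
  have hXB2' : ∀ x, XB (XB x) = x := fun x => by
    have := LinearMap.ext_iff.mp hXB2 x; simpa using this
  have hc4' : ∀ x, XB (XA x) = XA (XB x) := fun x => by
    have := LinearMap.ext_iff.mp hc4 x; simpa using this.symm
  -- key relation for the (1,1) component
  have hX' : (Real.cos θ : ℂ) • (XA (XB ψ) - XA (XB (ZA ψ)))
      = (Real.sin θ : ℂ) • (ψ + ZA ψ) := by
    have h := congrArg XB hX
    simp only [map_smul, LinearMap.sub_apply, LinearMap.add_apply, Module.End.one_apply,
      map_sub, map_add, hc4', hXB2'] at h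
    exact h
  have key0 : XA (XB ψ) - XA (XB (ZA ψ))
      = ((Real.cos θ : ℂ))⁻¹ • ((Real.sin θ : ℂ) • (ψ + ZA ψ)) := by
    rw [eq_inv_smul_iff₀ hcos]
    linear_combination (norm := module) hX'
  have key := sub_eq_iff_eq_add.mp key0
  simp only [Complex.ofReal_cos, Complex.ofReal_sin] at key
  funext p
  obtain ⟨a, b⟩ := p
  fin_cases a <;> fin_cases b <;>
    simp only [LinearMap.smul_apply, LinearMap.add_apply, Module.End.one_apply,
      map_add, map_smul, smul_add, one_smul, pow_zero, pow_one, neg_smul, neg_neg] <;>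
    norm_num [← hZ, hZA2', Prod.ext_iff]
  · -- (0,0)
    match_scalars <;> field_simp <;> ring
  · -- (1,1)
    rw [key]
    match_scalars <;> field_simp <;> ring
end
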